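/- Fix η_ch, η_dis ∈ (0, 1], a price p > 0, z ∈ ℝ, and S_min ≤ 0 ≤ S_max. Define G_μ(s) = [z+s]⁺·p − [z+s]⁻·p − μ·(η_ch·[s]⁺ − (1/η_dis)·[s]⁻) for s ∈ [S_min, S_max], and assume η_dis·p < p/η_ch (equivalently η_ch·η_dis < 1). Then the set of minimizers of G_μ on [S_min, S_max] equals: {S_min} if μ < η_dis·p; the closed interval [S_min, 0] if μ = η_dis·p; {0} if η_dis·p < μ < p/η_ch; the closed interval [0, S_max] if μ = p/η_ch; and {S_max} if μ > p/η_ch. -/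

import Mathlib

section Aux

variable {A B c Smin Smax : ℝ} {f : ℝ → ℝ}

private lemma hpos_aux (hf : ∀ s, f s = c + A * max s 0 - B * max (-s) 0)
    {s : ℝ} (hs : 0 ≤ s) : f s = c + A * s := by
  rw [hf, max_eq_left hs, max_eq_right (by linarith : -s ≤ 0)]; ring

private lemma hneg_aux (hf : ∀ s, f s = c + A * max s 0 - B * max (-s) 0)
    {s : ℝ} (hs : s ≤ 0) : f s = c + B * s := by
  rw [hf, max_eq_right hs, max_eq_left (by linarith : 0 ≤ -s)]; ring

private lemma case1 (hf : ∀ s, f s = c + A * max s 0 - B * max (-s) 0)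
    (hS1 : Smin ≤ 0) (hS2 : 0 ≤ Smax) (hA : 0 < A) (hB : 0 < B) :
    {s ∈ Set.Icc Smin Smax | ∀ t ∈ Set.Icc Smin Smax, f s ≤ f t} = {Smin} := by
  ext s
  simp only [Set.mem_setOf_eq, Set.mem_singleton_iff, Set.mem_Icc]
  constructor
  · rintro ⟨⟨h1, h2⟩, hm⟩
    have hmin := hm Smin ⟨le_rfl, le_trans hS1 hS2⟩
    rw [hneg_aux hf hS1] at hmin
    rcases le_total s 0 with h | h
    · rw [hneg_aux hf h] at hmin
      nlinarith
    · rw [hpos_aux hf h] at hmin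
      have h4 : A * s = 0 :=
        le_antisymm (by nlinarith [mul_nonpos_of_nonneg_of_nonpos hB.le hS1])
          (mul_nonneg hA.le h)
      have h5 : B * Smin = 0 :=
        le_antisymm (mul_nonpos_of_nonneg_of_nonpos hB.le hS1) (by linarith)
      have hs : s = 0 := by
        rcases mul_eq_zero.mp h4 with h' | h'
        · exact absurd h' hA.ne'
        · exact h'
      have hm0 : Smin = 0 := by
        rcases mul_eq_zero.mp h5 with h' | h'
        · exact absurd h' hB.ne'
        · exact h'
      rw [hs, hm0]
  · rintro rfl
    refine ⟨⟨le_rfl, le_trans hS1 hS2⟩, fun t ⟨ht1, ht2⟩ => ?_⟩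
    rw [hneg_aux hf hS1]
    rcases le_total t 0 with h | h
    · rw [hneg_aux hf h]; nlinarith
    · rw [hpos_aux hf h]
      nlinarith [mul_nonneg hA.le h, mul_nonpos_of_nonneg_of_nonpos hB.le hS1]

private lemma case2 (hf : ∀ s, f s = c + A * max s 0 - B * max (-s) 0)
    (hS1 : Smin ≤ 0) (hS2 : 0 ≤ Smax) (hA : 0 < A) (hB : B = 0) :
    {s ∈ Set.Icc Smin Smax | ∀ t ∈ Set.Icc Smin Smax, f s ≤ f t} = Set.Icc Smin 0 := by
  ext s
  simp only [Set.mem_setOf_eq, Set.mem_Icc]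
  constructor
  · rintro ⟨⟨h1, h2⟩, hm⟩
    have hmin := hm 0 ⟨hS1, hS2⟩
    rw [hpos_aux hf le_rfl] at hmin
    refine ⟨h1, ?_⟩
    rcases le_total s 0 with h | h
    · exact h
    · rw [hpos_aux hf h] at hmin; nlinarith
  · rintro ⟨h1, h2⟩
    refine ⟨⟨h1, le_trans h2 hS2⟩, fun t ⟨ht1, ht2⟩ => ?_⟩
    rw [hneg_aux hf h2, hB]
    rcases le_total t 0 with h | h
    · rw [hneg_aux hf h, hB]; linarith
    · rw [hpos_aux hf h]; nlinarith [mul_nonneg hA.le h]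

private lemma case3 (hf : ∀ s, f s = c + A * max s 0 - B * max (-s) 0)
    (hS1 : Smin ≤ 0) (hS2 : 0 ≤ Smax) (hA : 0 < A) (hB : B < 0) :
    {s ∈ Set.Icc Smin Smax | ∀ t ∈ Set.Icc Smin Smax, f s ≤ f t} = {0} := by
  ext s
  simp only [Set.mem_setOf_eq, Set.mem_singleton_iff, Set.mem_Icc]
  constructor
  · rintro ⟨⟨h1, h2⟩, hm⟩
    have hmin := hm 0 ⟨hS1, hS2⟩
    rw [hpos_aux hf le_rfl] at hmin
    rcases le_total s 0 with h | h
    · rw [hneg_aux hf h] at hmin; nlinarith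
    · rw [hpos_aux hf h] at hmin; nlinarith
  · rintro rfl
    refine ⟨⟨hS1, hS2⟩, fun t ⟨ht1, ht2⟩ => ?_⟩
    rw [hpos_aux hf le_rfl]
    rcases le_total t 0 with h | h
    · rw [hneg_aux hf h]; nlinarith [mul_nonneg (neg_nonneg.mpr hB.le) (neg_nonneg.mpr h)]
    · rw [hpos_aux hf h]; nlinarith [mul_nonneg hA.le h]

private lemma case4 (hf : ∀ s, f s = c + A * max s 0 - B * max (-s) 0)
    (hS1 : Smin ≤ 0) (hS2 : 0 ≤ Smax) (hA : A = 0) (hB : B < 0) :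
    {s ∈ Set.Icc Smin Smax | ∀ t ∈ Set.Icc Smin Smax, f s ≤ f t} = Set.Icc 0 Smax := by
  ext s
  simp only [Set.mem_setOf_eq, Set.mem_Icc]
  constructor
  · rintro ⟨⟨h1, h2⟩, hm⟩
    have hmin := hm 0 ⟨hS1, hS2⟩
    rw [hpos_aux hf le_rfl] at hmin
    refine ⟨?_, h2⟩
    rcases le_total s 0 with h | h
    · rw [hneg_aux hf h] at hmin; nlinarith
    · exact h
  · rintro ⟨h1, h2⟩
    refine ⟨⟨le_trans hS1 h1, h2⟩, fun t ⟨ht1, ht2⟩ => ?_⟩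
    rw [hpos_aux hf h1, hA]
    rcases le_total t 0 with h | h
    · rw [hneg_aux hf h]; nlinarith
    · rw [hpos_aux hf h, hA]; linarith

private lemma case5 (hf : ∀ s, f s = c + A * max s 0 - B * max (-s) 0)
    (hS1 : Smin ≤ 0) (hS2 : 0 ≤ Smax) (hA : A < 0) (hB : B < 0) :
    {s ∈ Set.Icc Smin Smax | ∀ t ∈ Set.Icc Smin Smax, f s ≤ f t} = {Smax} := by
  ext s
  simp only [Set.mem_setOf_eq, Set.mem_singleton_iff, Set.mem_Icc]
  constructor
  · rintro ⟨⟨h1, h2⟩, hm⟩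
    have hmin := hm Smax ⟨le_trans hS1 hS2, le_rfl⟩
    rw [hpos_aux hf hS2] at hmin
    rcases le_total s 0 with h | h
    · rw [hneg_aux hf h] at hmin
      have h4 : B * s = 0 :=
        le_antisymm (by nlinarith [mul_nonpos_of_nonpos_of_nonneg hA.le hS2]) (by nlinarith)
      have h5 : A * Smax = 0 :=
        le_antisymm (mul_nonpos_of_nonpos_of_nonneg hA.le hS2) (by linarith)
      have hs : s = 0 := by
        rcases mul_eq_zero.mp h4 with h' | h'
        · exact absurd h' hB.ne
        · exact h'
      have hm0 : Smax = 0 := by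
        rcases mul_eq_zero.mp h5 with h' | h'
        · exact absurd h' hA.ne
        · exact h'
      rw [hs, hm0]
    · rw [hpos_aux hf h] at hmin
      nlinarith
  · rintro rfl
    refine ⟨⟨le_trans hS1 hS2, le_rfl⟩, fun t ⟨ht1, ht2⟩ => ?_⟩
    rw [hpos_aux hf hS2]
    rcases le_total t 0 with h | h
    · rw [hneg_aux hf h]
      nlinarith [mul_nonneg (neg_nonneg.mpr hB.le) (neg_nonneg.mpr h),
        mul_nonpos_of_nonpos_of_nonneg hA.le hS2]
    · rw [hpos_aux hf h]; nlinarith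

end Aux

/-- NEM 1.0, Equation (9) / Remark 2: with equal buying and
selling price `p > 0` and `η_dis·p < p/η_ch`, the set of minimizers of
`G_μ(s) = [z+s]⁺·p − [z+s]⁻·p − μ·(η_ch·[s]⁺ − (1/η_dis)·[s]⁻)` on
`[S_min, S_max]` is: `{S_min}` if `μ < η_dis·p`; the interval `[S_min, 0]` if
`μ = η_dis·p`; `{0}` if `η_dis·p < μ < p/η_ch`; the interval `[0, S_max]` if
`μ = p/η_ch`; and `{S_max}` if `μ > p/η_ch`. -/
theorem nem1_threshold_structure (ηch ηdis p z Smin Smax : ℝ)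
    (hch : ηch ∈ Set.Ioc (0 : ℝ) 1) (hdis : ηdis ∈ Set.Ioc (0 : ℝ) 1)
    (hp : p > 0) (hS1 : Smin ≤ 0) (hS2 : 0 ≤ Smax)
    (hlt : ηdis * p < p / ηch)
    (G : ℝ → ℝ → ℝ)
    (hG : ∀ μ s, G μ s = max (z + s) 0 * p - max (-(z + s)) 0 * p
        - μ * (ηch * max s 0 - (1 / ηdis) * max (-s) 0)) :
    ∀ μ : ℝ,
      (μ < ηdis * p →
        {s ∈ Set.Icc Smin Smax | ∀ t ∈ Set.Icc Smin Smax, G μ s ≤ G μ t} = {Smin}) ∧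
      (μ = ηdis * p →
        {s ∈ Set.Icc Smin Smax | ∀ t ∈ Set.Icc Smin Smax, G μ s ≤ G μ t}
          = Set.Icc Smin 0) ∧
      (ηdis * p < μ ∧ μ < p / ηch →
        {s ∈ Set.Icc Smin Smax | ∀ t ∈ Set.Icc Smin Smax, G μ s ≤ G μ t} = {0}) ∧
      (μ = p / ηch →
        {s ∈ Set.Icc Smin Smax | ∀ t ∈ Set.Icc Smin Smax, G μ s ≤ G μ t}
          = Set.Icc 0 Smax) ∧
      (μ > p / ηch →
        {s ∈ Set.Icc Smin Smax | ∀ t ∈ Set.Icc Smin Smax, G μ s ≤ G μ t} = {Smax}) := by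
  obtain ⟨hch0, hch1⟩ := hch
  obtain ⟨hdis0, hdis1⟩ := hdis
  have hlt' : ηdis * p * ηch < p := (lt_div_iff₀ hch0).mp hlt
  intro μ
  have hf : ∀ s, G μ s = z * p + (p - μ * ηch) * max s 0 - (p - μ / ηdis) * max (-s) 0 := by
    intro s
    rw [hG]
    rcases le_total (z + s) 0 with h1 | h1 <;> rcases le_total s 0 with h2 | h2 <;>
      [rw [max_eq_right h1, max_eq_left (by linarith : 0 ≤ -(z+s)), max_eq_right h2,
          max_eq_left (by linarith : 0 ≤ -s)];
       rw [max_eq_right h1, max_eq_left (by linarith : 0 ≤ -(z+s)), max_eq_left h2,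
          max_eq_right (by linarith : -s ≤ 0)];
       rw [max_eq_left h1, max_eq_right (by linarith : -(z+s) ≤ 0), max_eq_right h2,
          max_eq_left (by linarith : 0 ≤ -s)];
       rw [max_eq_left h1, max_eq_right (by linarith : -(z+s) ≤ 0), max_eq_left h2,
          max_eq_right (by linarith : -s ≤ 0)]] <;>
      field_simp <;> ring
  refine ⟨fun hμ => ?_, fun hμ => ?_, fun hμ => ?_, fun hμ => ?_, fun hμ => ?_⟩
  · refine case1 hf hS1 hS2 ?_ ?_
    · nlinarith [mul_lt_mul_of_pos_right hμ hch0]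
    · have : μ / ηdis < p := (div_lt_iff₀ hdis0).mpr (by nlinarith)
      linarith
  · refine case2 hf hS1 hS2 ?_ ?_
    · nlinarith
    · rw [hμ]; field_simp; ring
  · obtain ⟨hμ1, hμ2⟩ := hμ
    refine case3 hf hS1 hS2 ?_ ?_
    · have : μ * ηch < p := (lt_div_iff₀ hch0).mp hμ2
      linarith
    · have : p < μ / ηdis := (lt_div_iff₀ hdis0).mpr (by nlinarith)
      linarith
  · refine case4 hf hS1 hS2 ?_ ?_
    · rw [hμ]; field_simp; ring
    · have hμ' : ηdis * p < μ := hμ ▸ hlt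
      have : p < μ / ηdis := (lt_div_iff₀ hdis0).mpr (by nlinarith)
      linarith
  · refine case5 hf hS1 hS2 ?_ ?_
    · have : p < μ * ηch := (div_lt_iff₀ hch0).mp hμ
      linarith
    · have hμ' : ηdis * p < μ := lt_trans hlt hμ
      have : p < μ / ηdis := (lt_div_iff₀ hdis0).mpr (by nlinarith)
      linarith
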